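/- Let G₁ and G₂ be graphs on n₁ and n₂ vertices respectively, let 0 ≤ α ≤ 1 and β = 1−α. Then the characteristic polynomial of A_α(G₁ ∘ G₂) satisfies f_{A_α(G₁∘G₂)}(ν) = (f_{A_α(G₂)}(ν − α))^{n₁} · f_{A_α(G₁)}(ν − αn₂ − β²Γ_{A_α(G₂)}(ν − α)), for all ν such that (ν−α)I − A_α(G₂) is invertible. -/

import Mathlib

open Matrix Polynomial

open scoped Classical in
/-- The real adjacency matrix of a simple graph. -/
noncomputable def adjMat {V : Type*} (G : SimpleGraph V) : Matrix V V ℝ :=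
  Matrix.of fun u v => if G.Adj u v then 1 else 0

open scoped Classical in
/-- The diagonal degree matrix of a simple graph. -/
noncomputable def degMatrix {V : Type*} (G : SimpleGraph V) : Matrix V V ℝ :=
  Matrix.of fun u v => if u = v then ((G.neighborSet u).ncard : ℝ) else 0

/-- `A_α(G) = α D(G) + (1-α) A(G)`. -/
noncomputable def Aalpha {V : Type*} (G : SimpleGraph V) (α : ℝ) : Matrix V V ℝ :=
  α • degMatrix G + (1 - α) • adjMat G

open scoped Classical in
/-- The `M`-coronal `Γ_M(θ) = jᵀ (θ I - M)⁻¹ j`, the sum of the entries of `(θ I - M)⁻¹`. -/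
noncomputable def coronal {n : Type*} [Fintype n] (M : Matrix n n ℝ) (θ : ℝ) : ℝ :=
  ∑ i, ∑ j, (θ • (1 : Matrix n n ℝ) - M)⁻¹ i j

open scoped Classical in
/-- The vertex-edge incidence matrix of a simple graph. -/
noncomputable def incMat {V : Type*} (G : SimpleGraph V) : Matrix V G.edgeSet ℝ :=
  Matrix.of fun u e => if u ∈ (e : Sym2 V) then 1 else 0

/-- The corona `G₁ ∘ G₂`: one copy of `G₁` and one copy of `G₂` for every vertex of `G₁`,
joining vertex `i` of `G₁` to every vertex of the `i`-th copy of `G₂`. -/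
def corona {V₁ V₂ : Type*} (G₁ : SimpleGraph V₁) (G₂ : SimpleGraph V₂) :
    SimpleGraph (V₁ ⊕ V₁ × V₂) where
  Adj x y :=
    match x, y with
    | Sum.inl u, Sum.inl v => G₁.Adj u v
    | Sum.inl u, Sum.inr p => u = p.1
    | Sum.inr p, Sum.inl u => u = p.1
    | Sum.inr p, Sum.inr q => p.1 = q.1 ∧ G₂.Adj p.2 q.2
  symm := by
    constructor
    rintro (u | p) (v | q) h
    · exact G₁.adj_symm h
    · exact h
    · exact h
    · exact ⟨h.1.symm, G₂.adj_symm h.2⟩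
  loopless := by
    constructor
    rintro (u | p) h
    · exact G₁.irrefl h
    · exact G₂.irrefl h.2

/-- The edge corona `G₁ ◊ G₂`: one copy of `G₁` and one copy of `G₂` for every edge of `G₁`,
joining both endpoints of edge `e` of `G₁` to every vertex of the copy of `G₂` indexed by `e`. -/
def edgeCorona {V₁ V₂ : Type*} (G₁ : SimpleGraph V₁) (G₂ : SimpleGraph V₂) :
    SimpleGraph (V₁ ⊕ (G₁.edgeSet × V₂)) where
  Adj x y :=
    match x, y with
    | Sum.inl u, Sum.inl v => G₁.Adj u v
    | Sum.inl u, Sum.inr p => u ∈ (p.1 : Sym2 V₁)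
    | Sum.inr p, Sum.inl u => u ∈ (p.1 : Sym2 V₁)
    | Sum.inr p, Sum.inr q => p.1 = q.1 ∧ G₂.Adj p.2 q.2
  symm := by
    constructor
    rintro (u | p) (v | q) h
    · exact G₁.adj_symm h
    · exact h
    · exact h
    · exact ⟨h.1.symm, G₂.adj_symm h.2⟩
  loopless := by
    constructor
    rintro (u | p) h
    · exact G₁.irrefl h
    · exact G₂.irrefl h.2

/-- The `R`-vertex corona `G₁ ⊙ G₂`: the `R`-graph of `G₁` (a new vertex per edge, joined to the
endpoints of that edge) together with one copy of `G₂` for every vertex of `G₁`, joining vertex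
`i` of `G₁` to every vertex of the `i`-th copy of `G₂`. -/
def RvertexCorona {V₁ V₂ : Type*} (G₁ : SimpleGraph V₁) (G₂ : SimpleGraph V₂) :
    SimpleGraph (V₁ ⊕ (G₁.edgeSet ⊕ V₁ × V₂)) where
  Adj x y :=
    match x, y with
    | Sum.inl u, Sum.inl v => G₁.Adj u v
    | Sum.inl u, Sum.inr (Sum.inl e) => u ∈ (e : Sym2 V₁)
    | Sum.inr (Sum.inl e), Sum.inl u => u ∈ (e : Sym2 V₁)
    | Sum.inl u, Sum.inr (Sum.inr p) => u = p.1
    | Sum.inr (Sum.inr p), Sum.inl u => u = p.1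
    | Sum.inr (Sum.inr p), Sum.inr (Sum.inr q) => p.1 = q.1 ∧ G₂.Adj p.2 q.2
    | _, _ => False
  symm := by
    constructor
    rintro (u | (e | p)) (v | (f | q)) h
    all_goals first
      | exact G₁.adj_symm h
      | exact h
      | exact ⟨h.1.symm, G₂.adj_symm h.2⟩
  loopless := by
    constructor
    rintro (u | (e | p)) h
    · exact G₁.irrefl h
    · exact h
    · exact G₂.irrefl h.2

/-- The `R`-edge corona `G₁ ⊖ G₂`: the `R`-graph of `G₁` (a new vertex per edge, joined to the
endpoints of that edge) together with one copy of `G₂` for every edge of `G₁`, joining the new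
vertex of edge `e` to every vertex of the copy of `G₂` indexed by `e`. -/
def RedgeCorona {V₁ V₂ : Type*} (G₁ : SimpleGraph V₁) (G₂ : SimpleGraph V₂) :
    SimpleGraph (V₁ ⊕ (G₁.edgeSet ⊕ G₁.edgeSet × V₂)) where
  Adj x y :=
    match x, y with
    | Sum.inl u, Sum.inl v => G₁.Adj u v
    | Sum.inl u, Sum.inr (Sum.inl e) => u ∈ (e : Sym2 V₁)
    | Sum.inr (Sum.inl e), Sum.inl u => u ∈ (e : Sym2 V₁)
    | Sum.inr (Sum.inl e), Sum.inr (Sum.inr p) => e = p.1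
    | Sum.inr (Sum.inr p), Sum.inr (Sum.inl e) => e = p.1
    | Sum.inr (Sum.inr p), Sum.inr (Sum.inr q) => p.1 = q.1 ∧ G₂.Adj p.2 q.2
    | _, _ => False
  symm := by
    constructor
    rintro (u | (e | p)) (v | (f | q)) h
    all_goals first
      | exact G₁.adj_symm h
      | exact h
      | exact h.symm
      | exact ⟨h.1.symm, G₂.adj_symm h.2⟩
  loopless := by
    constructor
    rintro (u | (e | p)) h
    · exact G₁.irrefl h
    · exact h
    · exact G₂.irrefl h.2
section AuxCorona

variable {V₁ V₂ : Type*} [Fintype V₁] [Fintype V₂]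
  (G₁ : SimpleGraph V₁) (G₂ : SimpleGraph V₂)

lemma corona_adj_inl_inl (u v : V₁) :
    (corona G₁ G₂).Adj (Sum.inl u) (Sum.inl v) ↔ G₁.Adj u v := Iff.rfl

lemma corona_adj_inl_inr (u : V₁) (q : V₁ × V₂) :
    (corona G₁ G₂).Adj (Sum.inl u) (Sum.inr q) ↔ u = q.1 := Iff.rfl

lemma corona_adj_inr_inl (p : V₁ × V₂) (v : V₁) :
    (corona G₁ G₂).Adj (Sum.inr p) (Sum.inl v) ↔ v = p.1 := Iff.rfl

lemma corona_adj_inr_inr (p q : V₁ × V₂) :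
    (corona G₁ G₂).Adj (Sum.inr p) (Sum.inr q) ↔ p.1 = q.1 ∧ G₂.Adj p.2 q.2 := Iff.rfl

lemma corona_deg_inl (u : V₁) :
    ((corona G₁ G₂).neighborSet (Sum.inl u)).ncard
      = (G₁.neighborSet u).ncard + Fintype.card V₂ := by
  classical
  have hset : (corona G₁ G₂).neighborSet (Sum.inl u)
      = Sum.inl '' G₁.neighborSet u ∪ Sum.inr '' ((fun w => (u, w)) '' Set.univ) := by
    ext (v | p) <;>
      simp [SimpleGraph.mem_neighborSet, corona, eq_comm, Prod.ext_iff]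
  rw [hset, Set.ncard_union_eq (by simp [Set.disjoint_left]) (Set.toFinite _) (Set.toFinite _),
    Set.ncard_image_of_injective _ Sum.inl_injective,
    Set.ncard_image_of_injective _ Sum.inr_injective,
    Set.ncard_image_of_injective _ (fun a b h => (Prod.ext_iff.mp h).2),
    Set.ncard_univ, Nat.card_eq_fintype_card]

lemma corona_deg_inr (p : V₁ × V₂) :
    ((corona G₁ G₂).neighborSet (Sum.inr p)).ncard
      = (G₂.neighborSet p.2).ncard + 1 := by
  classical
  have hset : (corona G₁ G₂).neighborSet (Sum.inr p)
      = {Sum.inl p.1} ∪ Sum.inr '' ((fun w => (p.1, w)) '' G₂.neighborSet p.2) := by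
    ext (v | q)
    · simp [SimpleGraph.mem_neighborSet, corona, eq_comm, Prod.ext_iff, and_comm]
    · simp only [SimpleGraph.mem_neighborSet, corona, Set.mem_union, Set.mem_singleton_iff,
        Set.mem_image, reduceCtorEq, false_or]
      constructor
      · rintro ⟨h1, h2⟩
        exact ⟨q, ⟨⟨q.2, h2, by rw [h1]⟩, rfl⟩⟩
      · rintro ⟨r, ⟨w, hw, hr⟩, h⟩
        obtain rfl : r = q := Sum.inr_injective h
        subst hr
        exact ⟨rfl, hw⟩
  rw [hset, Set.ncard_union_eq (by simp [Set.disjoint_left]) (Set.toFinite _) (Set.toFinite _),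
    Set.ncard_image_of_injective _ Sum.inr_injective,
    Set.ncard_image_of_injective _ (fun a b h => (Prod.ext_iff.mp h).2),
    Set.ncard_singleton]
  omega

end AuxCorona

theorem corona_Aalpha_charpoly {V₁ V₂ : Type*} [Fintype V₁] [Fintype V₂]
    [DecidableEq V₁] [DecidableEq V₂]
    (G₁ : SimpleGraph V₁) (G₂ : SimpleGraph V₂)
    (α : ℝ) (h0 : 0 ≤ α) (h1 : α ≤ 1) (β : ℝ) (hβ : β = 1 - α) (ν : ℝ)
    (hinv : det ((ν - α) • (1 : Matrix V₂ V₂ ℝ) - Aalpha G₂ α) ≠ 0) :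
    det (ν • (1 : Matrix (V₁ ⊕ V₁ × V₂) (V₁ ⊕ V₁ × V₂) ℝ) - Aalpha (corona G₁ G₂) α)
      = (det ((ν - α) • (1 : Matrix V₂ V₂ ℝ) - Aalpha G₂ α)) ^ (Fintype.card V₁) *
        det ((ν - α * Fintype.card V₂ - β ^ 2 * coronal (Aalpha G₂ α) (ν - α)) •
            (1 : Matrix V₁ V₁ ℝ) - Aalpha G₁ α) := by
  classical
  subst hβ
  set N : Matrix V₂ V₂ ℝ := (ν - α) • (1 : Matrix V₂ V₂ ℝ) - Aalpha G₂ α with hNdef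
  have hNdet : N.det ≠ 0 := hinv
  set Γ : ℝ := coronal (Aalpha G₂ α) (ν - α) with hΓdef
  set A : Matrix V₁ V₁ ℝ :=
    (ν - α * Fintype.card V₂) • (1 : Matrix V₁ V₁ ℝ) - Aalpha G₁ α with hAdef
  set B : Matrix V₁ (V₁ × V₂) ℝ :=
    Matrix.of (fun u p => if u = p.1 then -(1 - α) else 0) with hBdef
  set C : Matrix (V₁ × V₂) V₁ ℝ :=
    Matrix.of (fun p u => if u = p.1 then -(1 - α) else 0) with hCdef
  set D : Matrix (V₁ × V₂) (V₁ × V₂) ℝ :=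
    Matrix.of (fun p q => if p.1 = q.1 then N p.2 q.2 else 0) with hDdef
  have hM : ν • (1 : Matrix (V₁ ⊕ V₁ × V₂) (V₁ ⊕ V₁ × V₂) ℝ) - Aalpha (corona G₁ G₂) α
      = fromBlocks A B C D := by
    ext x y
    rcases x with u | p <;> rcases y with v | q
    · simp only [fromBlocks_apply₁₁, Matrix.sub_apply, Matrix.smul_apply, Matrix.one_apply,
        Aalpha, Matrix.add_apply, degMatrix, adjMat, Matrix.of_apply, corona_deg_inl,
        hAdef, Sum.inl.injEq, smul_eq_mul, corona_adj_inl_inl]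
      split_ifs <;> push_cast <;> ring
    · simp only [fromBlocks_apply₁₂, Matrix.sub_apply, Matrix.smul_apply, Matrix.one_apply,
        Aalpha, Matrix.add_apply, degMatrix, adjMat, Matrix.of_apply,
        hBdef, smul_eq_mul, corona_adj_inl_inr, reduceCtorEq, if_false]
      split_ifs <;> ring
    · simp only [fromBlocks_apply₂₁, Matrix.sub_apply, Matrix.smul_apply, Matrix.one_apply,
        Aalpha, Matrix.add_apply, degMatrix, adjMat, Matrix.of_apply,
        hCdef, smul_eq_mul, corona_adj_inr_inl, reduceCtorEq, if_false]
      split_ifs <;> ring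
    · simp only [fromBlocks_apply₂₂, Matrix.sub_apply, Matrix.smul_apply, Matrix.one_apply,
        Aalpha, Matrix.add_apply, degMatrix, adjMat, Matrix.of_apply, corona_deg_inr,
        hDdef, hNdef, Sum.inr.injEq, Prod.ext_iff, smul_eq_mul, corona_adj_inr_inr]
      split_ifs <;> push_cast <;> (first | ring1 | simp_all)
  have hD : D = (Matrix.reindex (Equiv.prodComm V₂ V₁) (Equiv.prodComm V₂ V₁))
      (Matrix.blockDiagonal fun _ : V₁ => N) := by
    ext p q
    simp [hDdef, Matrix.blockDiagonal_apply, Matrix.reindex_apply, Matrix.submatrix_apply,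
      Equiv.prodComm]
  have hDdet : D.det = N.det ^ Fintype.card V₁ := by
    rw [hD, Matrix.det_reindex_self, Matrix.det_blockDiagonal]
    simp
  have hDunit : IsUnit D.det := by
    rw [hDdet]; exact isUnit_iff_ne_zero.mpr (pow_ne_zero _ hNdet)
  haveI : Invertible D := D.invertibleOfIsUnitDet hDunit
  set E : Matrix (V₁ × V₂) (V₁ × V₂) ℝ :=
    Matrix.of (fun p q => if p.1 = q.1 then N⁻¹ p.2 q.2 else 0) with hEdef
  have hNN : N * N⁻¹ = 1 := Matrix.mul_nonsing_inv N (isUnit_iff_ne_zero.mpr hNdet)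
  have hDE : D * E = 1 := by
    ext p q
    rw [Matrix.mul_apply, Fintype.sum_prod_type]
    have key : ∀ a : V₁, (∑ w : V₂, D p (a, w) * E (a, w) q)
        = if a = p.1 then (if p.1 = q.1 then (N * N⁻¹) p.2 q.2 else 0) else 0 := by
      intro a
      by_cases ha : a = p.1
      · by_cases hq : p.1 = q.1
        · simp [hDdef, hEdef, ha, hq, Matrix.mul_apply]
        · simp [hDdef, hEdef, ha, hq]
      · have hpa : ¬ p.1 = a := fun h => ha h.symm
        simp [hDdef, hEdef, hpa, ha]
    simp_rw [key]
    rw [Finset.sum_ite_eq' Finset.univ p.1]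
    simp only [Finset.mem_univ, if_true, hNN]
    by_cases h : p.1 = q.1 <;> by_cases h2 : p.2 = q.2 <;>
      simp [Matrix.one_apply, Prod.ext_iff, h, h2]
  have hDinv : D⁻¹ = E := Matrix.inv_eq_right_inv hDE
  have hEC : E * C = Matrix.of (fun (p : V₁ × V₂) (u : V₁) =>
      if u = p.1 then -(1 - α) * ∑ w, N⁻¹ p.2 w else 0) := by
    ext p u
    rw [Matrix.mul_apply, Fintype.sum_prod_type]
    have key : ∀ b : V₁, (∑ w : V₂, E p (b, w) * C (b, w) u)
        = if b = p.1 then (if u = p.1 then ∑ w, N⁻¹ p.2 w * -(1 - α) else 0) else 0 := by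
      intro b
      by_cases hb : b = p.1
      · by_cases hu : u = p.1 <;> simp [hEdef, hCdef, hb, hu]
      · have hpb : ¬ p.1 = b := fun h => hb h.symm
        simp [hEdef, hCdef, hpb, hb]
    simp_rw [key]
    rw [Finset.sum_ite_eq' Finset.univ p.1]
    simp only [Finset.mem_univ, if_true, Matrix.of_apply]
    split_ifs with h
    · rw [← Finset.sum_mul]; ring
    · rfl
  have hBEC : B * (E * C) = ((1 - α) ^ 2 * Γ) • (1 : Matrix V₁ V₁ ℝ) := by
    rw [hEC]
    ext u v
    rw [Matrix.mul_apply, Fintype.sum_prod_type]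
    have key : ∀ a : V₁, (∑ w : V₂, B u (a, w) *
        Matrix.of (fun (p : V₁ × V₂) (x : V₁) =>
          if x = p.1 then -(1 - α) * ∑ w', N⁻¹ p.2 w' else 0) (a, w) v)
        = if a = u then (if v = u then
            ∑ w : V₂, -(1 - α) * (-(1 - α) * ∑ w', N⁻¹ w w') else 0) else 0 := by
      intro a
      by_cases ha : a = u
      · by_cases hv : v = u <;> simp [hBdef, ha, hv]
      · have hua : ¬ u = a := fun h => ha h.symm
        simp [hBdef, hua, ha]
    simp_rw [key]
    rw [Finset.sum_ite_eq' Finset.univ u]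
    have hΓ : Γ = ∑ i, ∑ j, N⁻¹ i j := by
      rw [hΓdef]; unfold coronal; rw [hNdef]; congr!
    simp only [Finset.mem_univ, if_true, Matrix.smul_apply, Matrix.one_apply, smul_eq_mul]
    by_cases hv : v = u
    · subst hv
      have hterm : ∀ w : V₂, -(1 - α) * (-(1 - α) * ∑ w', N⁻¹ w w')
          = (1 - α) ^ 2 * ∑ w', N⁻¹ w w' := fun w => by ring
      simp only [if_pos rfl, hterm, ← Finset.mul_sum, hΓ, mul_one]
      simp
    · simp [hv, Ne.symm hv]
  have hfinal : A - B * D⁻¹ * C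
      = (ν - α * Fintype.card V₂ - (1 - α) ^ 2 * Γ) • (1 : Matrix V₁ V₁ ℝ) - Aalpha G₁ α := by
    rw [hDinv, Matrix.mul_assoc, hBEC, hAdef]
    module
  rw [hM, Matrix.det_fromBlocks₂₂, hDdet, Matrix.invOf_eq_nonsing_inv, hfinal]
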